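/- arXiv:2007.04491 — 2 statements merged into one kernel-verified Lean document; each statement's English description precedes it below -/
import Mathlib

section
/- Let f : ℝ³ → ℂ be continuously differentiable with ‖f‖_{L²} ≤ a and ‖∇f‖_{L^∞} ≤ b, where a, b > 0. Then ‖f‖_{L^∞} ≤ C (a² b³)^{1/5} for a universal constant C. -/
open MeasureTheory Metric

/-- If `f : ℝ³ → ℂ` is `C¹` with `‖f‖_{L²} ≤ a` and `‖∇f‖_{L^∞} ≤ b` (`a, b > 0`),
then `‖f‖_{L^∞} ≤ C (a² b³)^{1/5}` for a universal constant `C`. -/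
theorem stmt_0 :
    ∃ C : ℝ, 0 < C ∧
      ∀ (f : EuclideanSpace ℝ (Fin 3) → ℂ) (a b : ℝ), 0 < a → 0 < b →
        ContDiff ℝ 1 f →
        eLpNorm f 2 volume ≤ ENNReal.ofReal a →
        (∀ x, ‖fderiv ℝ f x‖ ≤ b) →
        ∀ x, ‖f x‖ ≤ C * (a ^ 2 * b ^ 3) ^ ((1 : ℝ) / 5) := by
  set E := EuclideanSpace ℝ (Fin 3)
  set V : ENNReal := volume (ball (0 : E) 1) with hVdef
  have hVpos : 0 < V := measure_ball_pos _ _ one_pos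
  have hVlt : V < ⊤ := measure_ball_lt_top
  set v : ℝ := V.toReal with hvdef
  have hvpos : 0 < v := ENNReal.toReal_pos hVpos.ne' hVlt.ne
  refine ⟨(32 / v) ^ ((1:ℝ)/5), by positivity, ?_⟩
  intro f a b ha hb hf hL2 hgrad x
  set c := ‖f x‖ with hc
  rcases eq_or_lt_of_le (norm_nonneg (f x)) with h0 | hcpos
  · have : c = 0 := h0.symm
    rw [this]; positivity
  -- f is Lipschitz with constant b
  have hlip : LipschitzWith b.toNNReal f := by
    refine lipschitzWith_of_nnnorm_fderiv_le (𝕜 := ℝ) (hf.differentiable one_ne_zero) ?_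
    intro y
    rw [← NNReal.coe_le_coe]
    simpa [Real.coe_toNNReal _ hb.le] using hgrad y
  set r : ℝ := c / (2 * b) with hr
  have hrpos : 0 < r := by positivity
  -- pointwise lower bound on the ball
  have hlow : ∀ y ∈ ball x r, c / 2 ≤ ‖f y‖ := by
    intro y hy
    have hdist : dist (f y) (f x) ≤ b * dist y x := by
      simpa [Real.coe_toNNReal _ hb.le] using hlip.dist_le_mul y x
    have hyx : dist y x < r := mem_ball.mp hy
    have h1 : dist (f y) (f x) ≤ c / 2 := by
      calc dist (f y) (f x) ≤ b * dist y x := hdist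
        _ ≤ b * r := by nlinarith
        _ = c / 2 := by rw [hr]; field_simp
    have := norm_sub_norm_le (f x) (f y)
    rw [← dist_eq_norm] at this
    rw [dist_comm] at h1
    linarith
  -- L² lower bound
  have hI : eLpNorm f 2 volume = (∫⁻ y, (‖f y‖₊ : ENNReal) ^ (2:ℝ)) ^ ((1:ℝ)/2) := by
    rw [eLpNorm_eq_lintegral_rpow_enorm_toReal (by norm_num) (by norm_num)]
    norm_num
    rfl
  have hIle : (∫⁻ y, (‖f y‖₊ : ENNReal) ^ (2:ℝ)) ≤ ENNReal.ofReal a ^ (2:ℝ) := by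
    have := hL2
    rw [hI] at this
    have h2 := ENNReal.rpow_le_rpow this (by norm_num : (0:ℝ) ≤ 2)
    rwa [← ENNReal.rpow_mul, one_div, inv_mul_cancel₀ (by norm_num : (2:ℝ) ≠ 0),
      ENNReal.rpow_one] at h2
  have hball : ENNReal.ofReal (c/2) ^ (2:ℝ) * volume (ball x r)
      ≤ (∫⁻ y, (‖f y‖₊ : ENNReal) ^ (2:ℝ)) := by
    calc ENNReal.ofReal (c/2) ^ (2:ℝ) * volume (ball x r)
        = ∫⁻ _ in ball x r, ENNReal.ofReal (c/2) ^ (2:ℝ) := by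
          rw [setLIntegral_const]
      _ ≤ ∫⁻ y in ball x r, (‖f y‖₊ : ENNReal) ^ (2:ℝ) := by
          apply setLIntegral_mono_ae
            (hf.continuous.measurable.nnnorm.coe_nnreal_ennreal.pow_const _).aemeasurable
          filter_upwards with y hy
          apply ENNReal.rpow_le_rpow _ (by norm_num)
          rw [ENNReal.ofReal_le_iff_le_toReal (by simp)]
          simpa using hlow y hy
      _ ≤ ∫⁻ y, (‖f y‖₊ : ENNReal) ^ (2:ℝ) := setLIntegral_le_lintegral _ _
  have hvol : volume (ball x r) = ENNReal.ofReal (r ^ 3) * V := by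
    rw [Measure.addHaar_ball volume x hrpos.le, hVdef]
    congr 1
    simp [finrank_euclideanSpace]
  -- combine, pass to reals
  have hkey : ENNReal.ofReal ((c/2)^2 * (r^3)) * V ≤ ENNReal.ofReal (a^2) := by
    calc ENNReal.ofReal ((c/2)^2 * (r^3)) * V
        = ENNReal.ofReal (c/2) ^ (2:ℝ) * (ENNReal.ofReal (r^3) * V) := by
          rw [ENNReal.ofReal_mul (by positivity), ← mul_assoc]
          congr 1
          rw [ENNReal.ofReal_rpow_of_nonneg (by positivity) (by norm_num : (0:ℝ) ≤ 2)]
          congr 1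
          rw [← Real.rpow_natCast (c/2) 2]
          norm_num
      _ = ENNReal.ofReal (c/2) ^ (2:ℝ) * volume (ball x r) := by rw [hvol]
      _ ≤ (∫⁻ y, (‖f y‖₊ : ENNReal) ^ (2:ℝ)) := hball
      _ ≤ ENNReal.ofReal a ^ (2:ℝ) := hIle
      _ = ENNReal.ofReal (a^2) := by
          rw [ENNReal.ofReal_rpow_of_nonneg ha.le (by norm_num : (0:ℝ) ≤ 2)]
          congr 1
          rw [← Real.rpow_natCast a 2]
          norm_num
  have hreal : (c/2)^2 * r^3 * v ≤ a^2 := by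
    have hfin : ENNReal.ofReal ((c/2)^2 * (r^3)) * V ≠ ⊤ :=
      ENNReal.mul_ne_top ENNReal.ofReal_ne_top hVlt.ne
    have := ENNReal.toReal_mono ENNReal.ofReal_ne_top hkey
    rwa [ENNReal.toReal_mul, ENNReal.toReal_ofReal (by positivity),
      ENNReal.toReal_ofReal (by positivity), ← hvdef] at this
  -- c^5 ≤ 32 a² b³ / v
  have hc5 : c ^ 5 ≤ 32 / v * (a^2 * b^3) := by
    have hr3 : r ^ 3 = c^3 / (8 * b^3) := by
      rw [hr]; field_simp; ring
    rw [hr3] at hreal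
    have e : (c/2)^2 * (c^3/(8*b^3)) * v = c^5*v/(32*b^3) := by
      field_simp; ring
    rw [e] at hreal
    have h' : c^5*v ≤ a^2*(32*b^3) := by
      rw [div_le_iff₀ (by positivity)] at hreal
      linarith
    rw [div_mul_eq_mul_div, le_div_iff₀ hvpos]
    calc c^5*v ≤ a^2*(32*b^3) := h'
      _ = 32*(a^2*b^3) := by ring
  -- conclude via rpow
  have hcpow : c = ((c:ℝ) ^ 5) ^ ((1:ℝ)/5) := by
    rw [← Real.rpow_natCast c 5, ← Real.rpow_mul (norm_nonneg (f x))]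
    norm_num
    exact hc
  calc c = ((c:ℝ) ^ 5) ^ ((1:ℝ)/5) := hcpow
    _ ≤ (32 / v * (a^2 * b^3)) ^ ((1:ℝ)/5) :=
        Real.rpow_le_rpow (by positivity) hc5 (by norm_num)
    _ = (32 / v) ^ ((1:ℝ)/5) * (a^2 * b^3) ^ ((1:ℝ)/5) :=
        Real.mul_rpow (by positivity) (by positivity)
end

section
/- Let f : ℝ³ → ℂ satisfy ‖f‖_{L²} ≤ a₁, ‖∇f‖_{L²} ≤ a₂, and suppose both ‖∇f‖_{L^∞} ≤ b and ‖∇²f‖_{L^∞} ≤ b (as follows from an H⁴ bound via Sobolev embedding). Then ‖f‖_{L^∞} ≤ C a₁^{2/5} a₂^{6/25} b^{9/25} for a universal constant C. -/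
open MeasureTheory
open Metric ENNReal

noncomputable def Kball : ℝ := (volume (ball (0 : EuclideanSpace ℝ (Fin 3)) 1)).toReal

lemma Kball_pos : 0 < Kball := by
  apply ENNReal.toReal_pos
  · exact (measure_ball_pos volume _ one_pos).ne'
  · exact measure_ball_lt_top.ne

noncomputable def C₀ : ℝ := (32 / Kball) ^ ((1:ℝ)/5)

lemma C₀_pos : 0 < C₀ := Real.rpow_pos_of_pos (by (have := Kball_pos; positivity)) _

lemma key {E : Type*} [NormedAddCommGroup E] {g : EuclideanSpace ℝ (Fin 3) → E} {A L : ℝ}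
    (hA : 0 < A) (hL : 0 < L)
    (hlip : ∀ x y, ‖g x - g y‖ ≤ L * dist x y)
    (h2 : eLpNorm g 2 volume ≤ ENNReal.ofReal A) (x₀ : EuclideanSpace ℝ (Fin 3)) :
    ‖g x₀‖ ≤ C₀ * A ^ ((2:ℝ)/5) * L ^ ((3:ℝ)/5) := by
  set M := ‖g x₀‖ with hM
  rcases eq_or_lt_of_le (norm_nonneg (g x₀)) with h0 | hMpos
  · have hM0 : M = 0 := by rw [hM, ← h0]
    rw [hM0]
    have := C₀_pos
    positivity
  set r := M / (2 * L) with hr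
  have hrpos : 0 < r := by positivity
  have hball : ∀ y ∈ ball x₀ r, M / 2 ≤ ‖g y‖ := by
    intro y hy
    have h1 : ‖g x₀ - g y‖ ≤ L * dist x₀ y := hlip x₀ y
    have h2' : dist x₀ y < r := by rwa [dist_comm, ← mem_ball]
    have h3 : M - ‖g y‖ ≤ ‖g x₀ - g y‖ := by
      have := norm_sub_norm_le (g x₀) (g y); linarith
    have : L * dist x₀ y ≤ L * r := by nlinarith [dist_nonneg (x := x₀) (y := y)]
    have hLr : L * r = M / 2 := by rw [hr]; field_simp
    linarith
  -- indicator lower bound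
  have hind : eLpNorm ((ball x₀ r).indicator fun _ => (M/2 : ℝ)) 2 volume
      ≤ eLpNorm g 2 volume := by
    apply eLpNorm_mono
    intro x
    by_cases hx : x ∈ ball x₀ r
    · rw [Set.indicator_of_mem hx, Real.norm_eq_abs, abs_of_nonneg (by positivity)]
      exact hball x hx
    · rw [Set.indicator_of_notMem hx]; simp
  rw [eLpNorm_indicator_const measurableSet_ball two_ne_zero ENNReal.ofNat_ne_top] at hind
  have hvol : volume (ball x₀ r) = ENNReal.ofReal (r ^ 3) * volume (ball (0 : EuclideanSpace ℝ (Fin 3)) 1) := by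
    rw [Measure.addHaar_ball volume x₀ hrpos.le, finrank_euclideanSpace_fin]
  have hineq : (‖(M/2 : ℝ)‖₊ : ℝ≥0∞) * volume (ball x₀ r) ^ (1 / (2:ℝ≥0∞).toReal)
      ≤ ENNReal.ofReal A := le_trans hind h2
  -- convert to reals
  have htoReal : (M/2) * ((r^3 * Kball) ^ ((1:ℝ)/2)) ≤ A := by
    have hfin : volume (ball x₀ r) ≠ ⊤ := measure_ball_lt_top.ne
    have := ENNReal.toReal_mono (by simp) hineq
    rw [ENNReal.toReal_mul, ENNReal.toReal_ofReal hA.le] at this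
    rw [← ENNReal.toReal_rpow, hvol, ENNReal.toReal_mul, ENNReal.toReal_ofReal (by positivity)] at this
    have hMpos' : 0 < M := hMpos
    simpa [Kball, abs_of_pos hMpos'] using this
  have hsq : (M/2)^2 * (r^3 * Kball) ≤ A^2 := by
    have hX : (0:ℝ) ≤ r^3 * Kball := by have := Kball_pos; positivity
    have h1 : ((M/2) * ((r^3 * Kball) ^ ((1:ℝ)/2)))^2 ≤ A^2 := by
      apply sq_le_sq' _ htoReal
      nlinarith [Real.rpow_nonneg hX ((1:ℝ)/2), hMpos]
    have h2' : ((r^3 * Kball) ^ ((1:ℝ)/2))^2 = r^3 * Kball := by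
      rw [← Real.rpow_natCast ((r^3 * Kball) ^ ((1:ℝ)/2)) 2, ← Real.rpow_mul hX]
      norm_num
    calc (M/2)^2 * (r^3 * Kball) = ((M/2) * ((r^3 * Kball) ^ ((1:ℝ)/2)))^2 := by
          rw [mul_pow, h2']
      _ ≤ A^2 := h1
  have hK := Kball_pos
  have hM5 : M^5 ≤ 32 * A^2 * L^3 / Kball := by
    rw [hr] at hsq
    have key2 : M^5 * Kball = (M/2)^2 * ((M/(2*L))^3 * Kball) * (32 * L^3) := by
      field_simp; ring
    have h3 : M^5 * Kball ≤ A^2 * (32 * L^3) := by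
      rw [key2]
      exact mul_le_mul_of_nonneg_right (by linarith [hsq]) (by positivity)
    rw [le_div_iff₀ hK]
    linarith
  -- take fifth root
  have hRHSpos : (0:ℝ) < 32 * A^2 * L^3 / Kball := by positivity
  have hfinal : M ≤ (32 * A^2 * L^3 / Kball) ^ ((1:ℝ)/5) := by
    have h1 : (M^5 : ℝ) ^ ((1:ℝ)/5) ≤ (32 * A^2 * L^3 / Kball) ^ ((1:ℝ)/5) :=
      Real.rpow_le_rpow (by positivity) hM5 (by norm_num)
    have h2' : (M^5 : ℝ) ^ ((1:ℝ)/5) = M := by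
      rw [← Real.rpow_natCast M 5, ← Real.rpow_mul hMpos.le]
      norm_num
      rfl
    linarith [h1, h2'.symm.le]
  refine hfinal.trans (le_of_eq ?_)
  have : 32 * A^2 * L^3 / Kball = (32 / Kball) * A^2 * L^3 := by ring
  rw [this, Real.mul_rpow (by positivity) (by positivity),
      Real.mul_rpow (by positivity) (by positivity)]
  rw [← Real.rpow_natCast A 2, ← Real.rpow_natCast L 3,
      ← Real.rpow_mul hA.le, ← Real.rpow_mul hL.le]
  norm_num [C₀]

/-- If `f : ℝ³ → ℂ` satisfies `‖f‖_{L²} ≤ a₁`, `‖∇f‖_{L²} ≤ a₂`, and both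
`‖∇f‖_{L^∞} ≤ b` and `‖∇²f‖_{L^∞} ≤ b`, then
`‖f‖_{L^∞} ≤ C a₁^{2/5} a₂^{6/25} b^{9/25}` for a universal constant `C`. -/
theorem stmt_1 :
    ∃ C : ℝ, 0 < C ∧
      ∀ (f : EuclideanSpace ℝ (Fin 3) → ℂ) (a₁ a₂ b : ℝ),
        0 < a₁ → 0 < a₂ → 0 < b →
        ContDiff ℝ 2 f →
        eLpNorm f 2 volume ≤ ENNReal.ofReal a₁ →
        eLpNorm (fun x => fderiv ℝ f x) 2 volume ≤ ENNReal.ofReal a₂ →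
        (∀ x, ‖fderiv ℝ f x‖ ≤ b) →
        (∀ x, ‖iteratedFDeriv ℝ 2 f x‖ ≤ b) →
        ∀ x, ‖f x‖ ≤ C * a₁ ^ ((2 : ℝ) / 5) * a₂ ^ ((6 : ℝ) / 25) * b ^ ((9 : ℝ) / 25) := by
  refine ⟨C₀ * C₀ ^ ((3:ℝ)/5), by have := C₀_pos; positivity, ?_⟩
  intro f a₁ a₂ b ha₁ ha₂ hb hf hf2 hdf2 hdfb hd2fb x
  -- the derivative of fderiv f is bounded by b
  have hdiff2 : Differentiable ℝ (fderiv ℝ f) :=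
    (hf.fderiv_right (m := 1) (by norm_num)).differentiable (by norm_num)
  have hbound2 : ∀ y, ‖fderiv ℝ (fderiv ℝ f) y‖ ≤ b := by
    intro y
    have e1 : ‖fderiv ℝ (fderiv ℝ f) y‖ = ‖iteratedFDeriv ℝ 0 (fderiv ℝ (fderiv ℝ f)) y‖ := by
      rw [norm_iteratedFDeriv_zero]
    rw [e1, norm_iteratedFDeriv_fderiv, norm_iteratedFDeriv_fderiv]
    exact hd2fb y
  have hlip2 : ∀ x y : EuclideanSpace ℝ (Fin 3),
      ‖fderiv ℝ f x - fderiv ℝ f y‖ ≤ b * dist x y := by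
    intro x y
    have := Convex.norm_image_sub_le_of_norm_fderiv_le
      (f := fderiv ℝ f) (fun z _ => hdiff2 z)
      (fun z _ => hbound2 z) convex_univ (Set.mem_univ y) (Set.mem_univ x)
    rwa [dist_eq_norm]
  -- step 1
  have step1 : ∀ y, ‖fderiv ℝ f y‖ ≤ C₀ * a₂ ^ ((2:ℝ)/5) * b ^ ((3:ℝ)/5) :=
    key ha₂ hb hlip2 hdf2
  set B := C₀ * a₂ ^ ((2:ℝ)/5) * b ^ ((3:ℝ)/5) with hB
  have hBpos : 0 < B := by have := C₀_pos; positivity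
  -- step 2
  have hlip1 : ∀ x y : EuclideanSpace ℝ (Fin 3), ‖f x - f y‖ ≤ B * dist x y := by
    intro x y
    have := Convex.norm_image_sub_le_of_norm_fderiv_le
      (f := f) (fun z _ => hf.differentiable (by norm_num) z)
      (fun z _ => step1 z) convex_univ (Set.mem_univ y) (Set.mem_univ x)
    rwa [dist_eq_norm]
  have step2 := key ha₁ hBpos hlip1 hf2 x
  refine step2.trans (le_of_eq ?_)
  rw [hB]
  have hC := C₀_pos
  rw [Real.mul_rpow (by positivity) (by positivity),
      Real.mul_rpow (by positivity) (by positivity),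
      ← Real.rpow_mul ha₂.le, ← Real.rpow_mul hb.le]
  norm_num
  ring
end
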